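/- The collection τ = {A ⊆ X : A^l = A} of sets fixed by the ideal-based lower approximation is a topology on X: it contains ∅ and X, is closed under finite intersections, and is closed under arbitrary unions. -/

import Mathlib

open Set

variable {α : Type*}

/-- Predecessor neighborhood `[x]^R = {a : R x a}`. -/
def predNbhd (R : α → α → Prop) (x : α) : Set α := {a | R x a}

/-- `⟨x⟩ = ⋂ {[b]^R : b ∈ X and x ∈ [b]^R}`. -/
def minNbhd (R : α → α → Prop) (x : α) : Set α :=
  ⋂ b ∈ {b : α | x ∈ predNbhd R b}, predNbhd R b

/-- A lattice ideal of the powerset Boolean lattice: contains `∅`, downward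
closed under inclusion, and closed under binary unions. -/
def PowIdeal (I : Set (Set α)) : Prop :=
  ∅ ∈ I ∧ (∀ ⦃A B : Set α⦄, B ∈ I → A ⊆ B → A ∈ I) ∧
    ∀ ⦃A B : Set α⦄, A ∈ I → B ∈ I → A ∪ B ∈ I

/-- Lower approximation `A^l = {a ∈ A : ⟨a⟩ ∩ Aᶜ ∈ 𝕀}`. -/
def lowerI (R : α → α → Prop) (I : Set (Set α)) (A : Set α) : Set α :=
  {a | a ∈ A ∧ minNbhd R a ∩ Aᶜ ∈ I}

/-- Upper approximation `A^u = {a : ⟨a⟩ ∩ A ∉ 𝕀} ∪ A`. -/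
def upperI (R : α → α → Prop) (I : Set (Set α)) (A : Set α) : Set α :=
  {a | minNbhd R a ∩ A ∉ I} ∪ A

lemma fixed_iff (R : α → α → Prop) (I : Set (Set α)) (A : Set α) :
    lowerI R I A = A ↔ ∀ a ∈ A, minNbhd R a ∩ Aᶜ ∈ I := by
  constructor
  · intro h a ha
    rw [← h] at ha
    exact ha.2
  · intro h
    ext a
    exact ⟨fun ha => ha.1, fun ha => ⟨ha, h a ha⟩⟩

theorem ideal_lower_fixed_points_form_topology
    (R : α → α → Prop) (hR : Reflexive R) (I : Set (Set α)) (hI : PowIdeal I) :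
    (∅ : Set α) ∈ {A : Set α | lowerI R I A = A} ∧
    (univ : Set α) ∈ {A : Set α | lowerI R I A = A} ∧
    (∀ 𝒮 : Set (Set α), 𝒮.Finite → 𝒮 ⊆ {A : Set α | lowerI R I A = A} →
      ⋂₀ 𝒮 ∈ {A : Set α | lowerI R I A = A}) ∧
    (∀ 𝒮 : Set (Set α), 𝒮 ⊆ {A : Set α | lowerI R I A = A} →
      ⋃₀ 𝒮 ∈ {A : Set α | lowerI R I A = A}) := by
  have hdown := hI.2.1
  refine ⟨?_, ?_, ?_, ?_⟩
  · simp only [mem_setOf_eq, fixed_iff]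
    intro a ha; exact absurd ha (notMem_empty a)
  · simp only [mem_setOf_eq, fixed_iff]
    intro a _
    simpa using hI.1
  · intro S hS hsub
    revert hsub
    induction S, hS using Set.Finite.induction_on with
    | empty =>
      intro _
      simp only [sInter_empty, mem_setOf_eq, fixed_iff]
      intro a _; simpa using hI.1
    | @insert A S hAS hSfin ih =>
      intro hsub
      have hA : lowerI R I A = A := hsub (mem_insert _ _)
      have hS' : lowerI R I (⋂₀ S) = ⋂₀ S := ih (fun B hB => hsub (mem_insert_of_mem _ hB))
      simp only [mem_setOf_eq, fixed_iff] at hA hS' ⊢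
      intro a ha
      rw [sInter_insert] at ha ⊢
      have h1 := hA a ha.1
      have h2 := hS' a ha.2
      have : minNbhd R a ∩ (A ∩ ⋂₀ S)ᶜ ⊆ (minNbhd R a ∩ Aᶜ) ∪ (minNbhd R a ∩ (⋂₀ S)ᶜ) := by
        rw [compl_inter, inter_union_distrib_left]
      exact hdown (hI.2.2 h1 h2) this
  · intro S hsub
    simp only [mem_setOf_eq, fixed_iff]
    intro a ha
    obtain ⟨A, hAS, haA⟩ := ha
    have hA : lowerI R I A = A := hsub hAS
    rw [fixed_iff] at hA
    refine hdown (hA a haA) (inter_subset_inter_right _ ?_)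
    exact compl_subset_compl.2 (subset_sUnion_of_mem hAS)
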